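/- For every finite family L1,…,Ln of regular tree languages over a finite signature Σ, there exist an extension Σ′ of Σ by finitely many fresh constants and a regular-EUF formula φ over Σ′ ∪ {f}, with f a nullary function symbol, such that {w ∈ T(Σ) : φ{w/f} is valid} = L1 ∩ … ∩ Ln. In particular, the SyGuS problem (φ, G, f) where G is a regular tree grammar with L(G) = T(Σ) has a solution if and only if L1 ∩ … ∩ Ln ≠ ∅. -/

import Mathlib

namespace SyGuS

/-- Terms over a ranked alphabet: symbols `F`, each of arity `ar f`. -/
inductive Tm (F : Type) (ar : F → ℕ) : Type
  | app (f : F) (args : Fin (ar f) → Tm F ar) : Tm F ar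

/-- Arity function on `F ⊕ Fin k`: the `k` extra symbols are constants
(the variables `x₁,…,x_k`, treated as constants). -/
abbrev varAr {F : Type} (ar : F → ℕ) (k : ℕ) : F ⊕ Fin k → ℕ := Sum.elim ar fun _ => 0

/-- Arity function on `F ⊕ Unit`: the extra symbol is the function symbol `f` of arity `k`. -/
abbrev fAr {F : Type} (ar : F → ℕ) (k : ℕ) : F ⊕ Unit → ℕ := Sum.elim ar fun _ => k

/-- A (nonempty) first-order structure for the ranked alphabet `(F, ar)`. -/
structure Str (F : Type) (ar : F → ℕ) : Type 1 where
  D : Type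
  [nonemptyD : Nonempty D]
  interp : (f : F) → (Fin (ar f) → D) → D

attribute [instance] Str.nonemptyD

/-- Evaluation of a ground term in a structure. -/
def Tm.eval {F : Type} {ar : F → ℕ} (M : Str F ar) : Tm F ar → M.D
  | .app f args => M.interp f fun i => (args i).eval M

/-- First-order substitution: replace the variables `x₁,…,x_k` by terms. -/
def Tm.instVars {F : Type} {ar : F → ℕ} {k : ℕ} (σ : Fin k → Tm F ar) :
    Tm (F ⊕ Fin k) (varAr ar k) → Tm F ar
  | .app (Sum.inl g) args => .app g fun i => Tm.instVars σ (args i)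
  | .app (Sum.inr i) _ => σ i

/-- Second-order substitution `·{w/f}`: replace every application `f(s₁,…,s_k)` of the
distinguished symbol `f` by `w{s₁/x₁,…,s_k/x_k}`. -/
def Tm.soSubst {F : Type} {ar : F → ℕ} {k : ℕ} (w : Tm (F ⊕ Fin k) (varAr ar k)) :
    Tm (F ⊕ Unit) (fAr ar k) → Tm F ar
  | .app (Sum.inl g) args => .app g fun i => Tm.soSubst w (args i)
  | .app (Sum.inr _) args => Tm.instVars (fun i => Tm.soSubst w (args i)) w

/-- Renaming of symbols along an arity-preserving map. -/
def Tm.rename {F G : Type} {arF : F → ℕ} {arG : G → ℕ} (h : F → G)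
    (hh : ∀ f, arG (h f) = arF f) : Tm F arF → Tm G arG
  | .app f args => .app (h f) fun i => (args (Fin.cast (hh f) i)).rename h hh

/-- Equational consequence: `E ⊢ s = t` iff every structure satisfying all
equations of `E` also satisfies `s = t`. -/
def EqCons {F : Type} {ar : F → ℕ} (E : Set (Tm F ar × Tm F ar)) (s t : Tm F ar) : Prop :=
  ∀ M : Str F ar, (∀ e ∈ E, Tm.eval M e.1 = Tm.eval M e.2) → s.eval M = t.eval M

/-- Number of occurrences of the distinguished symbol `f` (the `Sum.inr` symbol) in a term. -/
def Tm.countF {F : Type} {ar : F → ℕ} {k : ℕ} : Tm (F ⊕ Unit) (fAr ar k) → ℕ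
  | .app (Sum.inl _) args => ∑ i, Tm.countF (args i)
  | .app (Sum.inr _) args => 1 + ∑ i, Tm.countF (args i)

/-- A literal: a (non-negated if `pos`, negated otherwise) equation between terms. -/
structure Lit (F : Type) (ar : F → ℕ) : Type where
  pos : Bool
  lhs : Tm F ar
  rhs : Tm F ar

def Lit.holds {F : Type} {ar : F → ℕ} (M : Str F ar) (l : Lit F ar) : Prop :=
  if l.pos then l.lhs.eval M = l.rhs.eval M else l.lhs.eval M ≠ l.rhs.eval M

/-- A clause: a disjunction of (possibly negated) equations, ITE-free by construction. -/
abbrev Clause (F : Type) (ar : F → ℕ) := List (Lit F ar)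

def Clause.holds {F : Type} {ar : F → ℕ} (M : Str F ar) (c : Clause F ar) : Prop :=
  ∃ l ∈ c, l.holds M

/-- A clause is valid if it holds in every nonempty structure. -/
def Clause.valid {F : Type} {ar : F → ℕ} (c : Clause F ar) : Prop :=
  ∀ M : Str F ar, c.holds M

/-- Number of occurrences of `f` in a literal (an equation). -/
def Lit.countF {F : Type} {ar : F → ℕ} {k : ℕ} (l : Lit (F ⊕ Unit) (fAr ar k)) : ℕ :=
  l.lhs.countF + l.rhs.countF

/-- Case-1 regular clause: every equation has at most one occurrence of `f`,
and `f` occurs only in non-negated equations. -/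
def Clause.Case1 {F : Type} {ar : F → ℕ} {k : ℕ} (c : Clause (F ⊕ Unit) (fAr ar k)) : Prop :=
  (∀ l ∈ c, l.countF ≤ 1) ∧ (∀ l ∈ c, l.pos = false → l.countF = 0)

/-- Case-2 regular clause: every equation has at most one occurrence of `f`, and `f`
occurs in exactly one negated equation of the clause and nowhere else. -/
def Clause.Case2 {F : Type} {ar : F → ℕ} {k : ℕ} (c : Clause (F ⊕ Unit) (fAr ar k)) : Prop :=
  (∀ l ∈ c, l.countF ≤ 1) ∧ (∀ l ∈ c, l.pos = true → l.countF = 0) ∧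
  (c.filter (fun l => l.pos = false ∧ l.countF ≠ 0)).length = 1

/-- A regular clause is one of case 1 or case 2. -/
def Clause.Regular {F : Type} {ar : F → ℕ} {k : ℕ} (c : Clause (F ⊕ Unit) (fAr ar k)) : Prop :=
  c.Case1 ∨ c.Case2

/-- Second-order substitution `·{w/f}` on literals. -/
def Lit.soSubst {F : Type} {ar : F → ℕ} {k : ℕ} (w : Tm (F ⊕ Fin k) (varAr ar k))
    (l : Lit (F ⊕ Unit) (fAr ar k)) : Lit F ar :=
  ⟨l.pos, Tm.soSubst w l.lhs, Tm.soSubst w l.rhs⟩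

/-- Second-order substitution `·{w/f}` on clauses. -/
def Clause.soSubst {F : Type} {ar : F → ℕ} {k : ℕ} (w : Tm (F ⊕ Fin k) (varAr ar k))
    (c : Clause (F ⊕ Unit) (fAr ar k)) : Clause F ar :=
  c.map (Lit.soSubst w)

/-- A regular-EUF formula: a finite conjunction of regular clauses. -/
structure RegEUF (F : Type) (ar : F → ℕ) (k : ℕ) : Type where
  clauses : List (Clause (F ⊕ Unit) (fAr ar k))
  regular : ∀ c ∈ clauses, c.Regular

/-- `w` is a solution for a regular-EUF formula if every clause becomes valid
after substituting `w` for `f`. -/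
def RegEUF.solves {F : Type} {ar : F → ℕ} {k : ℕ} (φ : RegEUF F ar k)
    (w : Tm (F ⊕ Fin k) (varAr ar k)) : Prop :=
  ∀ c ∈ φ.clauses, (c.soSubst w).valid

/-- Deterministic bottom-up tree automaton with a partial transition function. -/
structure DTA (F : Type) (ar : F → ℕ) : Type 1 where
  Q : Type
  [fintypeQ : Fintype Q]
  δ : (f : F) → (Fin (ar f) → Q) → Option Q
  final : Set Q

attribute [instance] DTA.fintypeQ

/-- Sequence a finite tuple of options. -/
def finSeq {Q : Type} : {n : ℕ} → (Fin n → Option Q) → Option (Fin n → Q)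
  | 0, _ => some (fun i => i.elim0)
  | _ + 1, f => (f 0).bind fun q => (finSeq fun i => f i.succ).map (Fin.cons q)

/-- The (partial) run of the automaton on a term: `δ` extended to terms. -/
def DTA.run {F : Type} {ar : F → ℕ} (A : DTA F ar) : Tm F ar → Option A.Q
  | .app f args => (finSeq fun i => A.run (args i)).bind fun qs => A.δ f qs

/-- The language accepted by the automaton. -/
def DTA.lang {F : Type} {ar : F → ℕ} (A : DTA F ar) : Set (Tm F ar) :=
  { t | ∃ q ∈ A.final, A.run t = some q }

/-- A tree language is regular if it is the language of some deterministic
bottom-up tree automaton. -/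
def IsRegularTreeLang {F : Type} {ar : F → ℕ} (L : Set (Tm F ar)) : Prop :=
  ∃ A : DTA F ar, L = A.lang

/-- Regular tree grammars: finitely many productions rewriting a nonterminal `A` into
`g(t₁,…,t_k)`, where each `tᵢ` is a nonterminal or a ground term. -/
structure RTG (F : Type) (ar : F → ℕ) : Type 1 where
  N : Type
  [fintypeN : Fintype N]
  start : N
  prods : Set (N × Σ g : F, (Fin (ar g) → N ⊕ Tm F ar))
  finite_prods : prods.Finite

attribute [instance] RTG.fintypeN

/-- Derivability of a term from a nonterminal of the grammar. -/
inductive RTG.Derives {F : Type} {ar : F → ℕ} (G : RTG F ar) : G.N → Tm F ar → Prop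
  | step (A : G.N) (g : F) (args : Fin (ar g) → G.N ⊕ Tm F ar) (ts : Fin (ar g) → Tm F ar)
      (h : (A, ⟨g, args⟩) ∈ G.prods)
      (hnt : ∀ i B, args i = Sum.inl B → G.Derives B (ts i))
      (htm : ∀ i u, args i = Sum.inr u → ts i = u) :
      G.Derives A (.app g ts)

/-- The language of a regular tree grammar: terms derivable from the start symbol. -/
def RTG.lang {F : Type} {ar : F → ℕ} (G : RTG F ar) : Set (Tm F ar) :=
  { t | G.Derives G.start t }

/-- Embedding of ground `Σ`-terms into the candidate expressions (for a nullary `f`)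
over the extension `Σ ∪ {c₁,…,c_c}` of `Σ` by `c` fresh constants. -/
def embedG {F : Type} {ar : F → ℕ} {c : ℕ} :
    Tm F ar → Tm ((F ⊕ Fin c) ⊕ Fin 0) (varAr (Sum.elim ar fun _ => 0) 0) :=
  Tm.rename (fun g => Sum.inl (Sum.inl g)) (fun _ => rfl)


section HardAux

variable {F : Type} {ar : F → ℕ} {c : ℕ}

/-- The `j`-th fresh constant, as a term over the extended signature. -/
def cTm' (j : Fin c) : Tm (F ⊕ Fin c) (Sum.elim ar fun _ => 0) :=
  .app (Sum.inr j) (fun i => i.elim0)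

/-- The `j`-th fresh constant, over the signature extended with `f`. -/
def cT (j : Fin c) : Tm ((F ⊕ Fin c) ⊕ Unit) (fAr (Sum.elim ar fun _ => 0) 0) :=
  .app (Sum.inl (Sum.inr j)) (fun i => i.elim0)

/-- The term `f` (nullary). -/
def fT : Tm ((F ⊕ Fin c) ⊕ Unit) (fAr (Sum.elim ar fun _ => 0) 0) :=
  .app (Sum.inr ()) (fun i => i.elim0)

/-- Embedding of `Σ`-terms into terms over the extended signature. -/
def embed1 : Tm F ar → Tm (F ⊕ Fin c) (Sum.elim ar fun _ => 0) :=
  Tm.rename Sum.inl (fun _ => rfl)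

lemma countF_cT (j : Fin c) : (cT (F := F) (ar := ar) j).countF = 0 := by
  simp [cT, Tm.countF]

lemma countF_fT : (fT (F := F) (ar := ar) (c := c)).countF = 1 := by
  simp [fT, Tm.countF]

lemma soSubst_cT (w : Tm ((F ⊕ Fin c) ⊕ Fin 0) (varAr (Sum.elim ar fun _ => 0) 0)) (j : Fin c) :
    Tm.soSubst w (cT j) = cTm' j := by
  show Tm.app (Sum.inr j) _ = Tm.app (Sum.inr j) _
  congr 1
  funext i
  exact i.elim0

lemma instVars_embedG (σ : Fin 0 → Tm (F ⊕ Fin c) (Sum.elim ar fun _ => 0)) (t : Tm F ar) :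
    Tm.instVars σ (embedG t) = embed1 t := by
  induction t with
  | app g args ih =>
    show Tm.app (Sum.inl g) _ = Tm.app (Sum.inl g) _
    congr 1
    funext i
    exact ih _

lemma soSubst_fT (v : Tm F ar) :
    Tm.soSubst (embedG (c := c) v) fT = embed1 v :=
  instVars_embedG _ v

lemma soSubst_transLhs (v : Tm F ar) (g : F) (h : Fin (ar g) → Fin c) :
    Tm.soSubst (embedG (c := c) v)
      (Tm.app (Sum.inl (Sum.inl g)) (fun j => cT (h j)))
      = Tm.app (Sum.inl g) (fun j => cTm' (h j)) := by
  show Tm.app (Sum.inl g) _ = Tm.app (Sum.inl g) _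
  congr 1
  funext j
  exact soSubst_cT _ _

lemma finSeq_some {Q : Type} : ∀ {n : ℕ} (v : Fin n → Q),
    finSeq (fun i => some (v i)) = some v := by
  intro n
  induction n with
  | zero => intro v; simp [finSeq]; funext i; exact i.elim0
  | succ m ih =>
    intro v
    simp only [finSeq, Option.bind_eq_bind, Option.bind_some, ih fun i => v i.succ,
      Option.map_some]
    exact congrArg some (Fin.cons_self_tail v)

lemma finSeq_eq_some {Q : Type} : ∀ {n : ℕ} {f : Fin n → Option Q} {v : Fin n → Q},
    finSeq f = some v → ∀ i, f i = some (v i) := by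
  intro n
  induction n with
  | zero => intro f v h i; exact i.elim0
  | succ m ih =>
    intro f v h i
    simp only [finSeq, Option.bind_eq_some_iff, Option.map_eq_some_iff] at h
    obtain ⟨q, hq, vt, hvt, hcons⟩ := h
    subst hcons
    refine Fin.cases ?_ (fun j => ?_) i
    · simpa using hq
    · simpa using ih hvt j

/-- The literals encoding the transitions of the automaton (negated equations). -/
noncomputable def transLits [Fintype F] (A : DTA F ar) (ι : A.Q → Fin c) :
    Clause ((F ⊕ Fin c) ⊕ Unit) (fAr (Sum.elim ar fun _ => 0) 0) :=
  (Finset.univ : Finset (Σ g : F, Fin (ar g) → A.Q)).toList.filterMap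
    (fun p => (A.δ p.1 p.2).map (fun q =>
      ⟨false, .app (Sum.inl (Sum.inl p.1)) (fun j => cT (ι (p.2 j))), cT (ι q)⟩))

/-- The literals `f = c_q` for final states `q` (positive equations). -/
noncomputable def finalLits (A : DTA F ar) (ι : A.Q → Fin c) :
    Clause ((F ⊕ Fin c) ⊕ Unit) (fAr (Sum.elim ar fun _ => 0) 0) :=
  (@Finset.filter _ (fun q => q ∈ A.final) (Classical.decPred _) Finset.univ).toList.map
    (fun q => ⟨true, fT, cT (ι q)⟩)

/-- The clause associated with an automaton. -/
noncomputable def clauseOf [Fintype F] (A : DTA F ar) (ι : A.Q → Fin c) :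
    Clause ((F ⊕ Fin c) ⊕ Unit) (fAr (Sum.elim ar fun _ => 0) 0) :=
  transLits A ι ++ finalLits A ι

lemma mem_transLits [Fintype F] {A : DTA F ar} {ι : A.Q → Fin c}
    {l : Lit ((F ⊕ Fin c) ⊕ Unit) (fAr (Sum.elim ar fun _ => 0) 0)} :
    l ∈ transLits A ι ↔ ∃ (g : F) (qs : Fin (ar g) → A.Q) (q : A.Q), A.δ g qs = some q ∧
      l = ⟨false, .app (Sum.inl (Sum.inl g)) (fun j => cT (ι (qs j))), cT (ι q)⟩ := by
  simp only [transLits, List.mem_filterMap, Finset.mem_toList, Finset.mem_univ, true_and,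
    Option.map_eq_some_iff, Sigma.exists]
  constructor
  · rintro ⟨g, qs, q, h, rfl⟩; exact ⟨g, qs, q, h, rfl⟩
  · rintro ⟨g, qs, q, h, rfl⟩; exact ⟨g, qs, q, h, rfl⟩

lemma mem_finalLits [Fintype F] {A : DTA F ar} {ι : A.Q → Fin c}
    {l : Lit ((F ⊕ Fin c) ⊕ Unit) (fAr (Sum.elim ar fun _ => 0) 0)} :
    l ∈ finalLits A ι ↔ ∃ q ∈ A.final, l = ⟨true, fT, cT (ι q)⟩ := by
  simp only [finalLits, List.mem_map, Finset.mem_toList, Finset.mem_filter, Finset.mem_univ,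
    true_and]
  constructor
  · rintro ⟨q, h, rfl⟩; exact ⟨q, h, rfl⟩
  · rintro ⟨q, h, rfl⟩; exact ⟨q, h, rfl⟩

lemma clauseOf_regular [Fintype F] (A : DTA F ar) (ι : A.Q → Fin c) :
    (clauseOf A ι).Regular := by
  left
  constructor
  · intro l hl
    rcases List.mem_append.mp hl with h | h
    · obtain ⟨g, qs, q, -, rfl⟩ := mem_transLits.mp h
      simp [Lit.countF, Tm.countF, countF_cT]
    · obtain ⟨q, -, rfl⟩ := mem_finalLits.mp h
      simp [Lit.countF, countF_fT, countF_cT]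
  · intro l hl hpos
    rcases List.mem_append.mp hl with h | h
    · obtain ⟨g, qs, q, -, rfl⟩ := mem_transLits.mp h
      simp [Lit.countF, Tm.countF, countF_cT]
    · obtain ⟨q, -, rfl⟩ := mem_finalLits.mp h
      simp at hpos

/-- The "run" structure: the domain is `Option A.Q`, the original symbols are interpreted
by the automaton transition function, the fresh constants by `ρ`. -/
noncomputable def runStr (A : DTA F ar) (ρ : Fin c → Option A.Q) :
    Str (F ⊕ Fin c) (Sum.elim ar fun _ => 0) where
  D := Option A.Q
  interp
    | Sum.inl g => fun v => (finSeq v).bind (A.δ g)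
    | Sum.inr j => fun _ => ρ j

lemma eval_runStr_cTm' (A : DTA F ar) (ρ : Fin c → Option A.Q) (j : Fin c) :
    Tm.eval (runStr A ρ) (cTm' j) = ρ j := rfl

lemma eval_runStr_embed1 (A : DTA F ar) (ρ : Fin c → Option A.Q) (t : Tm F ar) :
    Tm.eval (runStr A ρ) (embed1 t) = A.run t := by
  induction t with
  | app g args ih =>
    show (finSeq fun i => Tm.eval (runStr A ρ) (embed1 (args i))).bind (A.δ g)
      = (finSeq fun i => A.run (args i)).bind (A.δ g)
    rw [show (fun i => Tm.eval (runStr A ρ) (embed1 (args i))) = fun i => A.run (args i) from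
      funext ih]

/-- The key property of the clause associated with an automaton. -/
lemma clauseOf_spec [Fintype F] (A : DTA F ar) (ι : A.Q → Fin c)
    (ρ : Fin c → Option A.Q) (hρ : ∀ q, ρ (ι q) = some q) (w : Tm F ar) :
    Clause.valid ((clauseOf A ι).soSubst (embedG w)) ↔ w ∈ A.lang := by
  constructor
  · intro hval
    obtain ⟨l, hl, hh⟩ := hval (runStr A ρ)
    obtain ⟨l0, hl0, rfl⟩ := List.mem_map.mp hl
    rcases List.mem_append.mp hl0 with h | h
    · obtain ⟨g, qs, q, hδ, rfl⟩ := mem_transLits.mp h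
      exfalso
      apply hh
      show Tm.eval _ (Tm.soSubst (embedG w) _) = Tm.eval _ (Tm.soSubst (embedG w) _)
      dsimp only
      erw [soSubst_transLhs, soSubst_cT]
      show (finSeq fun j => Tm.eval (runStr A ρ) (cTm' (ι (qs j)))).bind (A.δ g) = ρ (ι q)
      simp only [eval_runStr_cTm', hρ, finSeq_some, Option.bind_some, hδ]
    · obtain ⟨q, hqfin, rfl⟩ := mem_finalLits.mp h
      have : Tm.eval (runStr A ρ) (Tm.soSubst (embedG w) fT)
          = Tm.eval (runStr A ρ) (Tm.soSubst (embedG w) (cT (ι q))) := hh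
      rw [soSubst_fT, soSubst_cT, eval_runStr_embed1, eval_runStr_cTm', hρ] at this
      exact ⟨q, hqfin, this⟩
  · rintro ⟨q0, hq0, hrun⟩ M
    by_cases hE : ∀ (g : F) (qs : Fin (ar g) → A.Q) (q : A.Q), A.δ g qs = some q →
        M.interp (Sum.inl g) (fun j => Tm.eval M (cTm' (ι (qs j)))) = Tm.eval M (cTm' (ι q))
    · have key : ∀ (t : Tm F ar) (q : A.Q), A.run t = some q →
          Tm.eval M (embed1 t) = Tm.eval M (cTm' (ι q)) := by
        intro t
        induction t with
        | app g args ih =>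
          intro q hq
          obtain ⟨qs, hqs, hδ⟩ := Option.bind_eq_some_iff.mp hq
          show M.interp (Sum.inl g) (fun i => Tm.eval M (embed1 (args i))) = _
          exact (congrArg _ (funext fun i => ih i (qs i) (finSeq_eq_some hqs i))).trans
            (hE g qs q hδ)
      refine ⟨Lit.soSubst (embedG w) ⟨true, fT, cT (ι q0)⟩,
        List.mem_map_of_mem (List.mem_append.mpr (Or.inr
          (mem_finalLits.mpr ⟨q0, hq0, rfl⟩))), ?_⟩
      show Tm.eval M (Tm.soSubst (embedG w) fT) = Tm.eval M (Tm.soSubst (embedG w) (cT (ι q0)))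
      rw [soSubst_fT, soSubst_cT]
      exact key w q0 hrun
    · push_neg at hE
      obtain ⟨g, qs, q, hδ, hne⟩ := hE
      refine ⟨Lit.soSubst (embedG w)
        ⟨false, .app (Sum.inl (Sum.inl g)) (fun j => cT (ι (qs j))), cT (ι q)⟩,
        List.mem_map_of_mem (List.mem_append.mpr (Or.inl
          (mem_transLits.mpr ⟨g, qs, q, hδ, rfl⟩))), ?_⟩
      show ¬ Tm.eval M (Tm.soSubst (embedG w) _) = Tm.eval M (Tm.soSubst (embedG w) _)
      dsimp only
      erw [soSubst_transLhs, soSubst_cT]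
      exact hne

end HardAux

/-- **Lemma `exp-hard`, reduction.**  For every finite family `L₁,…,L_n` of
regular tree languages over the finite signature `Σ = (F, ar)` there are an extension of
`Σ` by finitely many fresh constants and a regular-EUF formula `φ` over it, with a
nullary function symbol `f` to be synthesized, such that the set of ground terms
`w ∈ T(Σ)` with `φ{w/f}` valid is exactly `L₁ ∩ … ∩ L_n`.  In particular, for any regular
tree grammar `G` with `L(G) = T(Σ)`, the SyGuS problem `(φ, G, f)` has a solution iff
`L₁ ∩ … ∩ L_n ≠ ∅`. -/
theorem regular_intersection_as_regEUF {F : Type} [Fintype F] (ar : F → ℕ) (n : ℕ)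
    (L : Fin n → Set (Tm F ar)) (hL : ∀ i, IsRegularTreeLang (L i)) :
    ∃ (c : ℕ) (φ : RegEUF (F ⊕ Fin c) (Sum.elim ar fun _ => 0) 0),
      {w : Tm F ar | φ.solves (embedG w)} = ⋂ i, L i ∧
      ∀ G : RTG F ar, G.lang = Set.univ →
        ((∃ w ∈ G.lang, φ.solves (embedG w)) ↔ (⋂ i, L i).Nonempty) := by
  classical
  choose A hA using hL
  let e := Fintype.equivFin (Σ i : Fin n, (A i).Q)
  let φ : RegEUF (F ⊕ Fin (Fintype.card (Σ i : Fin n, (A i).Q))) (Sum.elim ar fun _ => 0) 0 :=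
    ⟨(List.finRange n).map (fun i => clauseOf (A i) (fun q => e ⟨i, q⟩)),
     fun cl hcl => by
      obtain ⟨i, -, rfl⟩ := List.mem_map.mp hcl
      exact clauseOf_regular _ _⟩
  have hspec : ∀ (i : Fin n) (w : Tm F ar),
      Clause.valid ((clauseOf (A i) (fun q => e ⟨i, q⟩)).soSubst (embedG w)) ↔ w ∈ (A i).lang := by
    intro i w
    refine clauseOf_spec _ _
      (fun j => if h : (e.symm j).1 = i then some (h ▸ (e.symm j).2) else none) ?_ w
    intro q
    show (if h : (e.symm (e ⟨i, q⟩)).1 = i then some (h ▸ (e.symm (e ⟨i, q⟩)).2) else none)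
        = some q
    have h1 : e.symm (e ⟨i, q⟩) = ⟨i, q⟩ := e.symm_apply_apply _
    revert h1
    generalize e.symm (e ⟨i, q⟩) = s
    rintro rfl
    simp
  have hmain : {w : Tm F ar | φ.solves (embedG w)} = ⋂ i, L i := by
    ext w
    simp only [Set.mem_setOf_eq, Set.mem_iInter]
    constructor
    · intro h i
      rw [hA i]
      exact (hspec i w).mp (h _ (List.mem_map_of_mem (List.mem_finRange i)))
    · intro h cl hcl
      obtain ⟨i, -, rfl⟩ := List.mem_map.mp hcl
      refine (hspec i w).mpr ?_
      rw [← hA i]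
      exact h i
  refine ⟨_, φ, hmain, ?_⟩
  intro G hG
  rw [hG]
  constructor
  · rintro ⟨w, -, hw⟩
    exact ⟨w, (Set.ext_iff.mp hmain w).mp hw⟩
  · rintro ⟨w, hw⟩
    exact ⟨w, trivial, (Set.ext_iff.mp hmain w).mpr hw⟩

end SyGuS
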